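/- Let H be an infinite group satisfying at least one of the following three properties: (a) H is the union of a strictly increasing sequence of proper subgroups; (b) H splits as a non-trivial free product with amalgamation; (c) H admits a surjective homomorphism onto ℤ. Then for every infinite subgroup G ≤ H there exists a subgroup K with G ≤ K ≤ H, |K| = |G|, and K satisfies at least one of the properties (a), (b), (c). (By Serre's theorem, a group lacks property FA — i.e. admits an action on a simplicial tree without a fixed point — exactly when it satisfies (a), (b) or (c); thus this states that the class of groups without property FA is bountiful.) -/

import Mathlib

/-- (a) The group is the union of a strictly increasing sequence of proper
subgroups, i.e. has cofinality `≤ ω`. -/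
def CofinalityLeOmega (G : Type*) [Group G] : Prop :=
  ∃ Hn : ℕ → Subgroup G, StrictMono Hn ∧ (∀ n, Hn n ≠ ⊤) ∧
    ∀ x : G, ∃ n, x ∈ Hn n

/-- (b) The group splits as a non-trivial free product with amalgamation. -/
def SplitsAsNontrivialAmalgam (G : Type*) [Group G] : Prop :=
  ∃ A B : Subgroup G,
    A ⊓ B ≠ A ∧ A ⊓ B ≠ B ∧
    Subgroup.closure ((A : Set G) ∪ (B : Set G)) = ⊤ ∧
    ∀ w : List G, w ≠ [] →
      (∀ x ∈ w, (x ∈ A ∧ x ∉ B) ∨ (x ∈ B ∧ x ∉ A)) →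
      w.Chain' (fun x y => ¬(x ∈ A ∧ y ∈ A) ∧ ¬(x ∈ B ∧ y ∈ B)) →
      w.prod ≠ 1

/-- (c) The group admits a surjective homomorphism onto `ℤ`. -/
def SurjectsOntoZ (G : Type*) [Group G] : Prop :=
  ∃ f : G →* Multiplicative ℤ, Function.Surjective f

section AuxBountiful
open Cardinal Subgroup

private lemma mySetInvEq {H : Type*} [Group H] (A B : Subgroup H) :
    ((A : Set H) ∪ (B : Set H))⁻¹ = (A : Set H) ∪ (B : Set H) := by
  ext x
  simp [Set.mem_inv]

private lemma myExistsList {H : Type*} [Group H] {s : Set H} (hs : s⁻¹ = s) {x : H}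
    (hx : x ∈ Subgroup.closure s) : ∃ l : List H, (∀ y ∈ l, y ∈ s) ∧ l.prod = x := by
  have hx' : x ∈ (Subgroup.closure s).toSubmonoid := hx
  rw [Subgroup.closure_toSubmonoid, hs, Set.union_self] at hx'
  exact Submonoid.exists_list_of_mem_closure hx'

private lemma myMkClosureLe {H : Type*} [Group H] (s : Set H) :
    Cardinal.mk (Subgroup.closure s) ≤ max (Cardinal.mk s) ℵ₀ := by
  have hsub : (s ∪ s⁻¹ : Set H) ⊆ (Subgroup.closure s : Set H) := by
    rintro x (hx | hx)
    · exact subset_closure hx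
    · exact (Subgroup.closure s).inv_mem_iff.mp (subset_closure (Set.mem_inv.mp hx))
  set f : List ↥(s ∪ s⁻¹ : Set H) → ↥(Subgroup.closure s) := fun l =>
    ⟨(l.map Subtype.val).prod, list_prod_mem (fun y hy => by
      obtain ⟨z, hz, rfl⟩ := List.mem_map.mp hy
      exact hsub z.2)⟩ with hf
  have hsurj : Function.Surjective f := by
    intro x
    have hx : (x : H) ∈ (Subgroup.closure s).toSubmonoid := x.2
    rw [Subgroup.closure_toSubmonoid] at hx
    obtain ⟨l, hl, hp⟩ := Submonoid.exists_list_of_mem_closure hx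
    refine ⟨l.attach.map (fun y => ⟨y.1, hl y.1 y.2⟩), ?_⟩
    apply Subtype.ext
    simp only [hf, List.map_map]
    simpa using hp
  calc Cardinal.mk ↥(Subgroup.closure s) ≤ Cardinal.mk (List ↥(s ∪ s⁻¹ : Set H)) :=
        Cardinal.mk_le_of_surjective hsurj
    _ ≤ max ℵ₀ (Cardinal.mk ↥(s ∪ s⁻¹ : Set H)) := Cardinal.mk_list_le_max _
    _ ≤ max (Cardinal.mk s) ℵ₀ := by
        apply max_le (le_max_right _ _)
        calc Cardinal.mk ↥(s ∪ s⁻¹ : Set H) ≤ Cardinal.mk s + Cardinal.mk ↥(s⁻¹ : Set H) :=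
              Cardinal.mk_union_le _ _
          _ = Cardinal.mk s + Cardinal.mk s := by
              congr 1
              exact Cardinal.mk_congr ⟨fun x => ⟨x.1⁻¹, Set.mem_inv.mp x.2⟩,
                fun x => ⟨x.1⁻¹, by simp [Set.mem_inv, x.2]⟩,
                fun x => by simp, fun x => by simp⟩
          _ ≤ max (max (Cardinal.mk s) (Cardinal.mk s)) ℵ₀ := Cardinal.add_le_max _ _
          _ = max (Cardinal.mk s) ℵ₀ := by rw [max_self]

private lemma myMkEq {H : Type*} [Group H] (G : Subgroup H) [Infinite G] (X : Set H)
    (hX : Cardinal.mk X ≤ Cardinal.mk G) :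
    Cardinal.mk (Subgroup.closure ((G : Set H) ∪ X)) = Cardinal.mk G := by
  apply le_antisymm
  · calc Cardinal.mk (Subgroup.closure ((G : Set H) ∪ X))
        ≤ max (Cardinal.mk ↥((G : Set H) ∪ X)) ℵ₀ := myMkClosureLe _
      _ ≤ max (Cardinal.mk G) ℵ₀ := by
          apply max_le_max ?_ le_rfl
          calc Cardinal.mk ↥((G : Set H) ∪ X) ≤ Cardinal.mk ↥(G : Set H) + Cardinal.mk X :=
                Cardinal.mk_union_le _ _
            _ ≤ Cardinal.mk G + Cardinal.mk G := by
                exact add_le_add le_rfl hX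
            _ = Cardinal.mk G := Cardinal.add_eq_self (Cardinal.aleph0_le_mk _)
      _ = Cardinal.mk G := max_eq_left (Cardinal.aleph0_le_mk _)
  · have h : (G : Set H) ⊆ (Subgroup.closure ((G : Set H) ∪ X) : Set H) :=
      Set.Subset.trans Set.subset_union_left Subgroup.subset_closure
    exact Cardinal.mk_le_mk_of_subset h

private lemma myCofinality {G : Type*} [Group G] (L : ℕ → Subgroup G) (hmono : Monotone L)
    (hne : ∀ n, L n ≠ ⊤) (hcov : ∀ x, ∃ n, x ∈ L n) : CofinalityLeOmega G := by
  have key : ∀ n, ∃ m, n < m ∧ L n < L m := by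
    intro n
    by_contra hc
    push_neg at hc
    apply hne n
    rw [Subgroup.eq_top_iff']
    intro x
    obtain ⟨k, hk⟩ := hcov x
    have h1 : L k ≤ L (max k (n + 1)) := hmono (le_max_left _ _)
    have h2 : L n ≤ L (max k (n + 1)) := hmono (le_trans (Nat.le_succ n) (le_max_right _ _))
    have h3 : ¬ L n < L (max k (n + 1)) := hc _ (lt_of_lt_of_le (Nat.lt_succ_self n) (le_max_right _ _))
    have : L (max k (n + 1)) = L n := le_antisymm (by
      by_contra hle
      exact h3 (lt_of_le_of_ne h2 (fun h => hle h.ge))) h2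
    exact this ▸ h1 hk
  choose m hm1 hm2 using key
  let g : ℕ → ℕ := fun n => Nat.rec 0 (fun _ k => m k) n
  have hg : StrictMono g := strictMono_nat_of_lt_succ (fun n => hm1 _)
  refine ⟨fun n => L (g n), strictMono_nat_of_lt_succ (fun n => hm2 _), fun n => hne _, ?_⟩
  intro x
  obtain ⟨n, hn⟩ := hcov x
  exact ⟨n, hmono (hg.le_apply) hn⟩

private lemma myClosureTop {H : Type*} [Group H] {A B K : Subgroup H} {T : Set H}
    (hK : K = Subgroup.closure T) (hT : T ⊆ (A : Set H) ∪ (B : Set H)) :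
    Subgroup.closure ((A.subgroupOf K : Set K) ∪ (B.subgroupOf K : Set K)) = ⊤ := by
  apply Subgroup.map_injective K.subtype_injective
  rw [MonoidHom.map_closure]
  have htop : Subgroup.map K.subtype ⊤ = K := by
    rw [← MonoidHom.range_eq_map, Subgroup.range_subtype]
  rw [htop]
  apply le_antisymm
  · rw [Subgroup.closure_le]
    rintro x ⟨y, _, rfl⟩
    exact y.2
  · conv_lhs => rw [hK]
    rw [Subgroup.closure_le]
    intro t ht
    have htK : t ∈ K := hK ▸ Subgroup.subset_closure ht
    apply Subgroup.subset_closure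
    rcases hT ht with h | h
    · exact ⟨⟨t, htK⟩, Or.inl h, rfl⟩
    · exact ⟨⟨t, htK⟩, Or.inr h, rfl⟩

private lemma myCaseC {H : Type*} [Group H] (f : H →* Multiplicative ℤ)
    (hf : Function.Surjective f) (G : Subgroup H) [Infinite G] :
    ∃ K : Subgroup H, G ≤ K ∧ Cardinal.mk K = Cardinal.mk G ∧ SurjectsOntoZ K := by
  obtain ⟨t, ht⟩ := hf (Multiplicative.ofAdd 1)
  set K : Subgroup H := Subgroup.closure ((G : Set H) ∪ {t}) with hKdef
  have htK : t ∈ K := Subgroup.subset_closure (Set.mem_union_right _ rfl)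
  refine ⟨K, ?_, ?_, ?_⟩
  · intro x hx
    exact Subgroup.subset_closure (Set.mem_union_left _ hx)
  · apply myMkEq
    rw [Cardinal.mk_singleton]
    exact le_trans (le_of_lt Cardinal.one_lt_aleph0) (Cardinal.aleph0_le_mk _)
  · refine ⟨f.comp K.subtype, fun z => ?_⟩
    have hz : ∀ n : ℤ, f (t ^ n) = Multiplicative.ofAdd n := by
      intro n
      rw [map_zpow, ht]
      rw [← ofAdd_zsmul, smul_eq_mul, mul_one]
    exact ⟨⟨t ^ (Multiplicative.toAdd z), zpow_mem htK _⟩, by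
      simpa using hz (Multiplicative.toAdd z)⟩

private lemma myCaseA {H : Type*} [Group H] (hH : CofinalityLeOmega H) (G : Subgroup H)
    [Infinite G] :
    ∃ K : Subgroup H, G ≤ K ∧ Cardinal.mk K = Cardinal.mk G ∧ CofinalityLeOmega K := by
  obtain ⟨Hn, hmono, hne, hcov⟩ := hH
  have hx : ∀ n, ∃ x : H, x ∉ Hn n := by
    intro n
    by_contra hc
    push_neg at hc
    exact hne n ((Subgroup.eq_top_iff' _).mpr hc)
  choose xs hxs using hx
  set K : Subgroup H := Subgroup.closure ((G : Set H) ∪ Set.range xs) with hKdef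
  have hxK : ∀ n, xs n ∈ K := fun n => Subgroup.subset_closure (Or.inr ⟨n, rfl⟩)
  refine ⟨K, fun x hx => Subgroup.subset_closure (Or.inl hx), ?_, ?_⟩
  · apply myMkEq
    have : Countable ↑(Set.range xs) := (Set.countable_range xs).to_subtype
    exact le_trans Cardinal.mk_le_aleph0 (Cardinal.aleph0_le_mk _)
  · apply myCofinality (fun n => (Hn n).subgroupOf K)
    · intro a b hab
      exact Subgroup.comap_mono (hmono.monotone hab)
    · intro n h
      apply hxs n
      have h2 : (⟨xs n, hxK n⟩ : K) ∈ (Hn n).subgroupOf K := h ▸ Subgroup.mem_top _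
      exact h2
    · intro x
      obtain ⟨n, hn⟩ := hcov (x : H)
      exact ⟨n, hn⟩

private lemma myCaseB {H : Type*} [Group H] (hH : SplitsAsNontrivialAmalgam H) (G : Subgroup H)
    [Infinite G] :
    ∃ K : Subgroup H, G ≤ K ∧ Cardinal.mk K = Cardinal.mk G ∧ SplitsAsNontrivialAmalgam K := by
  obtain ⟨A, B, hA, hB, hclos, hword⟩ := hH
  have ha : ∃ a, a ∈ A ∧ a ∉ B := by
    by_contra hc
    push_neg at hc
    exact hA (le_antisymm inf_le_left (fun x hx => ⟨hx, hc x hx⟩))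
  obtain ⟨a, haA, haB⟩ := ha
  have hb : ∃ b, b ∈ B ∧ b ∉ A := by
    by_contra hc
    push_neg at hc
    exact hB (le_antisymm inf_le_right (fun x hx => ⟨hc x hx, hx⟩))
  obtain ⟨b, hbB, hbA⟩ := hb
  set S : Set H := (A : Set H) ∪ (B : Set H) with hS
  have hSinv : S⁻¹ = S := by
    ext x
    simp only [hS, Set.mem_inv, Set.mem_union, SetLike.mem_coe, inv_mem_iff]
  have hlist : ∀ g : G, ∃ l : List H, (∀ y ∈ l, y ∈ S) ∧ l.prod = (g : H) :=
    fun g => myExistsList hSinv (hclos ▸ Subgroup.mem_top (g : H))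
  choose l hl hlp using hlist
  set T : Set H := (⋃ g : G, {x | x ∈ l g}) ∪ {a, b} with hT
  set K : Subgroup H := Subgroup.closure ((G : Set H) ∪ T) with hK
  have hTS : T ⊆ S := by
    rintro x (hx | hx)
    · obtain ⟨g, hg⟩ := Set.mem_iUnion.mp hx
      exact hl g x hg
    · rcases hx with rfl | rfl
      · exact Or.inl haA
      · exact Or.inr hbB
  have hKT : K = Subgroup.closure T := by
    apply le_antisymm
    · rw [hK, Subgroup.closure_le]
      rintro x (hx | hx)
      · have hpe : (l ⟨x, hx⟩).prod = x := hlp ⟨x, hx⟩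
        rw [← hpe]
        refine list_prod_mem (fun y hy => Subgroup.subset_closure ?_)
        exact Or.inl (Set.mem_iUnion.mpr ⟨⟨x, hx⟩, hy⟩)
      · exact Subgroup.subset_closure hx
    · rw [hK]
      exact Subgroup.closure_mono Set.subset_union_right
  have hGK : G ≤ K := fun x hx => Subgroup.subset_closure (Or.inl hx)
  have haK : a ∈ K := Subgroup.subset_closure (Or.inr (Or.inr (Set.mem_insert _ _)))
  have hbK : b ∈ K := Subgroup.subset_closure
    (Or.inr (Or.inr (Set.mem_insert_of_mem _ rfl)))
  refine ⟨K, hGK, ?_, ?_⟩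
  · apply myMkEq
    have h1 : Cardinal.mk ↥(⋃ g : G, {x | x ∈ l g}) ≤ Cardinal.mk G * ℵ₀ := by
      apply le_trans (Cardinal.mk_iUnion_le _)
      apply mul_le_mul' le_rfl
      apply ciSup_le'
      intro g
      have : Countable {x | x ∈ l g} := (List.finite_toSet (l g)).countable.to_subtype
      exact Cardinal.mk_le_aleph0
    have h2 : Cardinal.mk ↥({a, b} : Set H) ≤ ℵ₀ := by
      have : Countable ↥({a, b} : Set H) := (Set.toFinite _).countable.to_subtype
      exact Cardinal.mk_le_aleph0
    have hmul : Cardinal.mk G * ℵ₀ = Cardinal.mk G := by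
      rw [Cardinal.mul_eq_max (Cardinal.aleph0_le_mk _) le_rfl]
      exact max_eq_left (Cardinal.aleph0_le_mk _)
    calc Cardinal.mk T ≤ Cardinal.mk ↥(⋃ g : G, {x | x ∈ l g}) + Cardinal.mk ↥({a, b} : Set H) :=
          Cardinal.mk_union_le _ _
      _ ≤ Cardinal.mk G * ℵ₀ + ℵ₀ := add_le_add h1 h2
      _ = Cardinal.mk G + ℵ₀ := by rw [hmul]
      _ = Cardinal.mk G := by
          rw [Cardinal.add_eq_max (Cardinal.aleph0_le_mk _)]
          exact max_eq_left (Cardinal.aleph0_le_mk _)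
  · refine ⟨A.subgroupOf K, B.subgroupOf K, ?_, ?_, myClosureTop hKT hTS, ?_⟩
    · intro h
      have hx : (⟨a, haK⟩ : K) ∈ A.subgroupOf K := haA
      rw [← h] at hx
      exact haB hx.2
    · intro h
      have hx : (⟨b, hbK⟩ : K) ∈ B.subgroupOf K := hbB
      rw [← h] at hx
      exact hbA hx.1
    · intro w hw hmem hchain hprod
      refine hword (w.map K.subtype) ?_ ?_ ?_ ?_
      · exact fun h => hw (List.map_eq_nil_iff.mp h)
      · intro x hx
        obtain ⟨y, hy, rfl⟩ := List.mem_map.mp hx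
        rcases hmem y hy with ⟨h1, h2⟩ | ⟨h1, h2⟩
        · exact Or.inl ⟨h1, h2⟩
        · exact Or.inr ⟨h1, h2⟩
      · exact (List.isChain_map _).mpr hchain
      · rw [← map_list_prod, hprod, map_one]

end AuxBountiful

/-- The class of groups without property FA (characterized by Serre's theorem
as those satisfying (a), (b) or (c)) is bountiful. -/
theorem not_FA_bountiful {H : Type*} [Group H] [Infinite H]
    (hH : CofinalityLeOmega H ∨ SplitsAsNontrivialAmalgam H ∨ SurjectsOntoZ H) :
    ∀ G : Subgroup H, Infinite G →
      ∃ K : Subgroup H, G ≤ K ∧ Cardinal.mk K = Cardinal.mk G ∧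
        (CofinalityLeOmega K ∨ SplitsAsNontrivialAmalgam K ∨ SurjectsOntoZ K) := by
  intro G hG
  haveI : Infinite G := hG
  rcases hH with h | h | h
  · obtain ⟨K, h1, h2, h3⟩ := myCaseA h G
    exact ⟨K, h1, h2, Or.inl h3⟩
  · obtain ⟨K, h1, h2, h3⟩ := myCaseB h G
    exact ⟨K, h1, h2, Or.inr (Or.inl h3)⟩
  · obtain ⟨f, hf⟩ := h
    obtain ⟨K, h1, h2, h3⟩ := myCaseC f hf G
    exact ⟨K, h1, h2, Or.inr (Or.inr h3)⟩
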